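/- arXiv:2102.02785 — 4 statements merged into one kernel-verified Lean document; each statement's English description precedes it below -/
import Mathlib

section
/- The MaxHam rule, which maps a profile P to argmin over J in J(Φ) of max_i H(J_i, J), satisfies participation: no agent can, by abstaining, obtain an outcome set strictly preferred to the outcome when she participates truthfully, for any preference extension satisfying the standard consistency conditions. -/
def maxDist {m n : ℕ} (P : Fin n → Fin m → Bool) (J : Fin m → Bool) : ℕ :=
  Finset.univ.sup fun i => hammingDist (P i) J

/-- The MaxHam rule: the admissible judgments minimizing the maximum Hamming
distance to the profile's judgments. -/
def maxHam {m n : ℕ} (D : Finset (Fin m → Bool)) (P : Fin n → Fin m → Bool) :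
    Finset (Fin m → Bool) :=
  D.filter fun J => ∀ K ∈ D, maxDist P J ≤ maxDist P K

lemma maxDist_succAbove {m n : ℕ} (P : Fin (n + 1) → Fin m → Bool) (i : Fin (n + 1))
    (J : Fin m → Bool) :
    maxDist P J = max (hammingDist (P i) J)
      (maxDist (fun k : Fin n => P (i.succAbove k)) J) := by
  unfold maxDist
  rw [Fin.univ_succAbove n i, Finset.sup_cons, Finset.sup_map]
  rfl

/-- MaxHam satisfies participation: for any preference extension satisfying the
standard consistency conditions, no agent gets a strictly preferred outcome set by
abstaining.  Since a strict set preference `X ≻̊ Y` implies the existence of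
`J ∈ X`, `J' ∈ Y` with `J ≻_i J'` and not both in `X ∩ Y`, it suffices that no
such witnessing pair exists. -/
theorem maxHam_participation (m n : ℕ) (D : Finset (Fin m → Bool))
    (P : Fin (n + 1) → Fin m → Bool) (i : Fin (n + 1)) (hP : ∀ k, P k ∈ D) :
    ¬ ∃ J' ∈ maxHam D (fun k : Fin n => P (i.succAbove k)), ∃ J ∈ maxHam D P,
        hammingDist (P i) J' < hammingDist (P i) J ∧
        ¬ (J ∈ maxHam D (fun k : Fin n => P (i.succAbove k)) ∩ maxHam D P ∧
           J' ∈ maxHam D (fun k : Fin n => P (i.succAbove k)) ∩ maxHam D P) := by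
  rintro ⟨J', hJ', J, hJ, hlt, hnot⟩
  set P' : Fin n → Fin m → Bool := fun k => P (i.succAbove k) with hP'
  simp only [maxHam, Finset.mem_filter] at hJ hJ'
  obtain ⟨hJD, hJmin⟩ := hJ
  obtain ⟨hJ'D, hJ'min⟩ := hJ'
  -- a = maxDist P' J'
  have hle1 : maxDist P J ≤ maxDist P J' := hJmin J' hJ'D
  have hkeyJ := maxDist_succAbove P i J
  have hkeyJ' := maxDist_succAbove P i J'
  rw [← hP'] at hkeyJ hkeyJ'
  have hd : hammingDist (P i) J ≤ maxDist P J := by rw [hkeyJ]; exact le_max_left _ _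
  -- maxDist P J ≤ maxDist P' J'
  have h2 : maxDist P J ≤ maxDist P' J' := by
    rcases max_cases (hammingDist (P i) J') (maxDist P' J') with ⟨heq, _⟩ | ⟨heq, _⟩
    · omega
    · omega
  have h3 : maxDist P' J ≤ maxDist P' J' := by
    have : maxDist P' J ≤ maxDist P J := by rw [hkeyJ]; exact le_max_right _ _
    omega
  have h4 : maxDist P J' = maxDist P' J' := by
    have : hammingDist (P i) J' ≤ maxDist P' J' := by omega
    omega
  apply hnot
  constructor
  · refine Finset.mem_inter.mpr ⟨Finset.mem_filter.mpr ⟨hJD, fun K hK => ?_⟩,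
      Finset.mem_filter.mpr ⟨hJD, hJmin⟩⟩
    exact le_trans h3 (hJ'min K hK)
  · refine Finset.mem_inter.mpr ⟨Finset.mem_filter.mpr ⟨hJ'D, hJ'min⟩,
      Finset.mem_filter.mpr ⟨hJ'D, fun K hK => ?_⟩⟩
    have h5 : maxDist P' K ≤ maxDist P K := by
      rw [maxDist_succAbove P i K, ← hP']; exact le_max_right _ _
    have := hJ'min K hK
    omega
end

section
/- The MaxHam rule satisfies antipodal strategyproofness: no agent can, by submitting the componentwise complement of her truthful judgment, obtain an outcome set strictly preferred to the truthful outcome, for any preference extension satisfying the standard consistency conditions. -/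
lemma hamming_compl {m : ℕ} (x K : Fin m → Bool) :
    hammingDist (fun t => !(x t)) K = m - hammingDist x K := by
  classical
  have key : hammingDist (fun t => !(x t)) K + hammingDist x K = m := by
    unfold hammingDist
    have h1 : ({t | (fun t => !(x t)) t ≠ K t} : Finset (Fin m)) =
        Finset.univ.filter (fun t => ¬ (x t ≠ K t)) := by
      ext t
      simp [Bool.not_eq]
    have h2 : ({t | x t ≠ K t} : Finset (Fin m)) =
        Finset.univ.filter (fun t => x t ≠ K t) := by
      ext t; simp
    rw [h1, h2, Nat.add_comm, Finset.card_filter_add_card_filter_not]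
    simp
  omega

lemma hamming_le {m : ℕ} (x K : Fin m → Bool) : hammingDist x K ≤ m := by
  simpa using (hammingDist_le_card_fintype (x := x) (y := K))

/-- MaxHam satisfies antipodal strategyproofness: for any preference extension
satisfying the standard consistency conditions, no agent gets a strictly preferred
outcome set by reporting the componentwise complement of her truthful judgment. -/
theorem maxHam_antipodal_strategyproof (m n : ℕ) (D : Finset (Fin m → Bool))
    (P : Fin n → Fin m → Bool) (i : Fin n) (hP : ∀ k, P k ∈ D)
    (hanti : (fun t => !(P i t)) ∈ D) :
    ¬ ∃ J' ∈ maxHam D (Function.update P i (fun t => !(P i t))), ∃ J ∈ maxHam D P,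
        hammingDist (P i) J' < hammingDist (P i) J ∧
        ¬ (J ∈ maxHam D (Function.update P i (fun t => !(P i t))) ∩ maxHam D P ∧
           J' ∈ maxHam D (Function.update P i (fun t => !(P i t))) ∩ maxHam D P) := by
  classical
  set P' : Fin n → Fin m → Bool := Function.update P i (fun t => !(P i t)) with hP'
  rintro ⟨J', hJ', J, hJ, hlt, hnot⟩
  obtain ⟨hJ'D, hJ'min⟩ := Finset.mem_filter.mp hJ'
  obtain ⟨hJD, hJmin⟩ := Finset.mem_filter.mp hJ
  -- basic facts
  have hPi : P' i = fun t => !(P i t) := Function.update_self i _ P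
  have A1 : ∀ K : Fin m → Bool, hammingDist (P i) K ≤ maxDist P K := fun K =>
    Finset.le_sup (f := fun k => hammingDist (P k) K) (Finset.mem_univ i)
  have A2 : ∀ K : Fin m → Bool, m - hammingDist (P i) K ≤ maxDist P' K := by
    intro K
    have h : hammingDist (P' i) K ≤ maxDist P' K :=
      Finset.le_sup (f := fun k => hammingDist (P' k) K) (Finset.mem_univ i)
    rwa [hPi, hamming_compl] at h
  have A3 : ∀ K : Fin m → Bool,
      maxDist P' K ≤ max (maxDist P K) (m - hammingDist (P i) K) := by
    intro K
    refine Finset.sup_le fun k _ => ?_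
    by_cases hk : k = i
    · subst hk
      rw [hPi, hamming_compl]
      exact le_max_right _ _
    · rw [show P' k = P k from Function.update_of_ne hk _ P]
      have h : hammingDist (P k) K ≤ maxDist P K :=
        Finset.le_sup (f := fun j => hammingDist (P j) K) (Finset.mem_univ k)
      exact le_trans h (le_max_left _ _)
  have A4 : ∀ K : Fin m → Bool,
      maxDist P K ≤ max (maxDist P' K) (hammingDist (P i) K) := by
    intro K
    refine Finset.sup_le fun k _ => ?_
    by_cases hk : k = i
    · subst hk; exact le_max_right _ _
    · have : hammingDist (P k) K = hammingDist (P' k) K := by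
        rw [show P' k = P k from Function.update_of_ne hk _ P]
      rw [this]
      have h : hammingDist (P' k) K ≤ maxDist P' K :=
        Finset.le_sup (f := fun j => hammingDist (P' j) K) (Finset.mem_univ k)
      exact le_trans h (le_max_left _ _)
  have hJle : maxDist P J ≤ maxDist P J' := hJmin J' hJ'D
  have hJ'le : maxDist P' J' ≤ maxDist P' J := hJ'min J hJD
  by_cases hc : maxDist P' J ≤ maxDist P J
  · -- both J and J' are in both maxHam sets
    have h1 : hammingDist (P i) J' < maxDist P J :=
      lt_of_lt_of_le hlt (A1 J)
    have h2 : maxDist P J' ≤ maxDist P' J' := by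
      have := A4 J'
      rcases max_cases (maxDist P' J') (hammingDist (P i) J') with ⟨he, _⟩ | ⟨he, _⟩
      · omega
      · omega
    have heq : maxDist P J' = maxDist P J := le_antisymm (by omega) hJle
    have heq' : maxDist P' J = maxDist P' J' := le_antisymm (by omega) hJ'le
    apply hnot
    constructor
    · rw [Finset.mem_inter]
      refine ⟨Finset.mem_filter.mpr ⟨hJD, fun K hK => ?_⟩, hJ⟩
      rw [heq']; exact hJ'min K hK
    · rw [Finset.mem_inter]
      refine ⟨hJ', Finset.mem_filter.mpr ⟨hJ'D, fun K hK => ?_⟩⟩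
      rw [heq]; exact hJmin K hK
  · -- contradiction with hlt
    push_neg at hc
    have h3 : maxDist P' J ≤ m - hammingDist (P i) J := by
      have := A3 J
      rcases max_cases (maxDist P J) (m - hammingDist (P i) J) with ⟨he, _⟩ | ⟨he, _⟩
      · omega
      · omega
    have h4 : m - hammingDist (P i) J' ≤ m - hammingDist (P i) J :=
      le_trans (le_trans (A2 J') hJ'le) h3
    have h5 := hamming_le (P i) J
    have h6 := hamming_le (P i) J'
    omega
end

section
/- For decisive preferences over sets of judgments, participation implies antipodal strategyproofness: if a rule F is susceptible to antipodal manipulation by some agent i in some profile P (with decisive set preferences derived from Hamming-distance preferences), then F is susceptible to no-show manipulation by agent i in some profile. -/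
/-- Decisive strict set preference for an agent with truthful judgment `Ji`:
`X ≻̊ Y` iff there exist `J ∈ X`, `J' ∈ Y` with `H(Ji, J) < H(Ji, J')` and
not both `J, J'` in `X ∩ Y`. -/
def SetPref {m : ℕ} (Ji : Fin m → Bool) (X Y : Finset (Fin m → Bool)) : Prop :=
  ∃ J ∈ X, ∃ J' ∈ Y,
    hammingDist Ji J < hammingDist Ji J' ∧ ¬ (J ∈ X ∩ Y ∧ J' ∈ X ∩ Y)

lemma ham_compl {m : ℕ} (a J : Fin m → Bool) :
    hammingDist a J + hammingDist (fun t => !(a t)) J = m := by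
  classical
  unfold hammingDist
  have : ∀ t : Fin m, ((fun t => !(a t)) t ≠ J t) ↔ ¬ (a t ≠ J t) := by
    intro t
    cases h1 : a t <;> cases h2 : J t <;> simp [h1, h2]
  rw [Finset.filter_congr (fun t _ => this t)]
  simpa using Finset.card_filter_add_card_filter_not
    (s := (Finset.univ : Finset (Fin m))) (p := fun t => a t ≠ J t)

/-- For decisive preferences, participation implies antipodal strategyproofness
(contrapositive form): if `F` is susceptible to antipodal manipulation by agent `i`
in profile `P`, then `F` is susceptible to no-show manipulation by some agent in
some profile. -/
theorem participation_implies_antipodal_sp (m : ℕ) (D : Finset (Fin m → Bool))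
    (F : (n : ℕ) → (Fin n → Fin m → Bool) → Finset (Fin m → Bool))
    (hF : ∀ (n : ℕ) (P : Fin n → Fin m → Bool), (∀ k, P k ∈ D) →
      (F n P).Nonempty ∧ F n P ⊆ D)
    (n : ℕ) (P : Fin (n + 1) → Fin m → Bool) (i : Fin (n + 1))
    (hP : ∀ k, P k ∈ D) (hanti : (fun t => !(P i t)) ∈ D)
    (hmanip : SetPref (P i)
      (F (n + 1) (Function.update P i (fun t => !(P i t)))) (F (n + 1) P)) :
    ∃ (n' : ℕ) (P' : Fin (n' + 1) → Fin m → Bool) (i' : Fin (n' + 1)),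
      (∀ k, P' k ∈ D) ∧
      SetPref (P' i') (F n' (fun k => P' (i'.succAbove k))) (F (n' + 1) P') := by
  classical
  obtain ⟨J, hJA, J', hJ'B, hlt, hnot⟩ := hmanip
  set Q := Function.update P i (fun t => !(P i t)) with hQ
  set Z := F n (fun k => P (i.succAbove k)) with hZ
  set A := F (n + 1) Q with hA
  set B := F (n + 1) P with hB
  have hQmem : ∀ k, Q k ∈ D := by
    intro k
    by_cases h : k = i
    · subst h; simpa [Q, Function.update_self] using hanti
    · simpa [Q, Function.update_of_ne h] using hP k
  have hQsub : (fun k => Q (i.succAbove k)) = fun k => P (i.succAbove k) := by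
    funext k
    simp [Q, Function.update_of_ne (Fin.succAbove_ne i k)]
  have hZne : Z.Nonempty := (hF n _ (fun k => hP _)).1
  set d := hammingDist (P i) with hd
  by_cases h1 : ∃ K ∈ Z, d K < d J' ∧ ¬ (K ∈ B ∧ J' ∈ Z)
  · obtain ⟨K, hKZ, hKlt, hKnot⟩ := h1
    refine ⟨n, P, i, hP, K, hKZ, J', hJ'B, hKlt, ?_⟩
    rintro ⟨hK', hJ''⟩
    exact hKnot ⟨(Finset.mem_inter.mp hK').2, (Finset.mem_inter.mp hJ'').1⟩
  · by_cases h2 : ∃ K ∈ Z, d J < d K ∧ ¬ (K ∈ A ∧ J ∈ Z)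
    · obtain ⟨K, hKZ, hKlt, hKnot⟩ := h2
      refine ⟨n, Q, i, hQmem, ?_⟩
      rw [hQsub]
      have hQi : Q i = fun t => !(P i t) := Function.update_self _ _ _
      rw [hQi]
      refine ⟨K, hKZ, J, hJA, ?_, ?_⟩
      · have e1 := ham_compl (P i) K
        have e2 := ham_compl (P i) J
        simp only [hd] at hKlt
        omega
      · rintro ⟨hK', hJ''⟩
        exact hKnot ⟨(Finset.mem_inter.mp hK').2, (Finset.mem_inter.mp hJ'').1⟩
    · exfalso
      push_neg at h1 h2
      obtain ⟨K, hKZ⟩ := hZne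
      have key : J' ∈ Z ∨ J ∈ Z := by
        rcases lt_or_ge (d K) (d J') with h | h
        · exact Or.inl (h1 K hKZ h).2
        · exact Or.inr (h2 K hKZ (lt_of_lt_of_le hlt h)).2
      have hJZ : J ∈ Z := by
        rcases key with h | h
        · exact (h2 J' h hlt).2
        · exact h
      have hJB : J ∈ B := (h1 J hJZ hlt).1
      have hJ'Z : J' ∈ Z := (h1 J hJZ hlt).2
      have hJ'A : J' ∈ A := (h2 J' hJ'Z hlt).1
      exact hnot ⟨Finset.mem_inter.mpr ⟨hJA, hJB⟩, Finset.mem_inter.mpr ⟨hJ'A, hJ'B⟩⟩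
end

section
/- If a judgment aggregation rule is strategyproof, then it satisfies neither the maximin property nor the equity property. -/
def inequity {m n : ℕ} (P : Fin n → Fin m → Bool) (J : Fin m → Bool) : ℕ :=
  Finset.univ.sup fun p : Fin n × Fin n =>
    ((hammingDist (P p.1) J : ℤ) - (hammingDist (P p.2) J : ℤ)).natAbs

/-- The domain `{000000, 110000, 111000, 111111}`. -/
def D6 : Finset (Fin 6 → Bool) :=
  { ![false, false, false, false, false, false],
    ![true, true, false, false, false, false],
    ![true, true, true, false, false, false],
    ![true, true, true, true, true, true] }

def Ja : Fin 6 → Bool := ![false, false, false, false, false, false]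
def Jb : Fin 6 → Bool := ![true, true, false, false, false, false]
def Jc : Fin 6 → Bool := ![true, true, true, false, false, false]
def Jd : Fin 6 → Bool := ![true, true, true, true, true, true]

def Pac : Fin 2 → Fin 6 → Bool := ![Ja, Jc]
def Pad : Fin 2 → Fin 6 → Bool := ![Ja, Jd]

lemma force_singleton
    (F : (n : ℕ) → (Fin n → Fin 6 → Bool) → Finset (Fin 6 → Bool))
    {P : Fin 2 → Fin 6 → Bool} (hne : (F 2 P).Nonempty) (hsub : F 2 P ⊆ D6)
    {J0 : Fin 6 → Bool}
    (h : ∀ J ∈ D6, J ∈ F 2 P → J = J0) : F 2 P = {J0} := by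
  have hsub' : F 2 P ⊆ {J0} := by
    intro J hJ
    have := h J (hsub hJ) hJ
    simp [this]
  rcases Finset.subset_singleton_iff.mp hsub' with h' | h'
  · rw [h'] at hne; simp at hne
  · exact h'

lemma final_step
    (F : (n : ℕ) → (Fin n → Fin 6 → Bool) → Finset (Fin 6 → Bool))
    (hSP : ∀ (n : ℕ) (P P' : Fin n → Fin 6 → Bool) (i : Fin n),
      (∀ k, P k ∈ D6) → (∀ k, P' k ∈ D6) → (∀ k, k ≠ i → P' k = P k) →
      ¬ SetPref (P i) (F n P') (F n P))
    (h1 : F 2 Pac = {Jb}) (h2 : F 2 Pad = {Jc}) : False := by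
  have hpref := hSP 2 Pac Pad 1 (by decide) (by decide) (by decide)
  rw [h1, h2] at hpref
  have hPi : Pac 1 = Jc := rfl
  rw [hPi] at hpref
  exact hpref ⟨Jc, Finset.mem_singleton_self _, Jb, Finset.mem_singleton_self _,
    by decide, by decide⟩

/-- If a rule over the domain `D6` is strategyproof, it satisfies neither the
maximin property nor the equity property. -/
theorem strategyproof_not_egalitarian
    (F : (n : ℕ) → (Fin n → Fin 6 → Bool) → Finset (Fin 6 → Bool))
    (hF : ∀ (n : ℕ) (P : Fin n → Fin 6 → Bool), (∀ k, P k ∈ D6) →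
      (F n P).Nonempty ∧ F n P ⊆ D6)
    (hSP : ∀ (n : ℕ) (P P' : Fin n → Fin 6 → Bool) (i : Fin n),
      (∀ k, P k ∈ D6) → (∀ k, P' k ∈ D6) → (∀ k, k ≠ i → P' k = P k) →
      ¬ SetPref (P i) (F n P') (F n P)) :
    (¬ ∀ (n : ℕ) (P : Fin n → Fin 6 → Bool), (∀ k, P k ∈ D6) →
        ∀ J ∈ F n P, ∀ K ∈ D6, maxDist P J ≤ maxDist P K) ∧
    (¬ ∀ (n : ℕ) (P : Fin n → Fin 6 → Bool), (∀ k, P k ∈ D6) →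
        ∀ J ∈ F n P, ∀ K ∈ D6, inequity P J ≤ inequity P K) := by
  have hac : ∀ k, Pac k ∈ D6 := by decide
  have had : ∀ k, Pad k ∈ D6 := by decide
  constructor
  · intro hmax
    apply final_step F hSP
    · refine force_singleton F (hF 2 Pac hac).1 (hF 2 Pac hac).2 ?_
      intro J hJ hJF
      have hle := hmax 2 Pac hac J hJF Jb (by decide)
      fin_cases hJ
      · exact absurd hle (by decide)
      · rfl
      · exact absurd hle (by decide)
      · exact absurd hle (by decide)
    · refine force_singleton F (hF 2 Pad had).1 (hF 2 Pad had).2 ?_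
      intro J hJ hJF
      have hle := hmax 2 Pad had J hJF Jc (by decide)
      fin_cases hJ
      · exact absurd hle (by decide)
      · exact absurd hle (by decide)
      · rfl
      · exact absurd hle (by decide)
  · intro heq
    apply final_step F hSP
    · refine force_singleton F (hF 2 Pac hac).1 (hF 2 Pac hac).2 ?_
      intro J hJ hJF
      have hle := heq 2 Pac hac J hJF Jb (by decide)
      fin_cases hJ
      · exact absurd hle (by decide)
      · rfl
      · exact absurd hle (by decide)
      · exact absurd hle (by decide)
    · refine force_singleton F (hF 2 Pad had).1 (hF 2 Pad had).2 ?_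
      intro J hJ hJF
      have hle := heq 2 Pad had J hJF Jc (by decide)
      fin_cases hJ
      · exact absurd hle (by decide)
      · exact absurd hle (by decide)
      · rfl
      · exact absurd hle (by decide)
end
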